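/- For n ≥ 3, ∑_{N=1}^{n} C(n,N) N^{N-2} · N · A_{n-N}(-n) = 0, where A_m(x) = x(x+m)^{m-1} for m ≥ 1 and A_0(x) = 1; equivalently the weighted count ∑_F (-n)^{|M(F)|} N(F) over all decorated forests F on n labeled vertices vanishes. -/

import Mathlib

/-- The Abel polynomial with parameter `a = -1`:
`A m x = x(x+m)^{m-1}` for `m ≥ 1`, and `A 0 x = 1`. -/
def abel (m : ℕ) (x : ℚ) : ℚ := if m = 0 then 1 else x * (x + m) ^ (m - 1)

private lemma neg_one_pow_sub (a b : ℕ) (h : b ≤ a) :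
    (-1 : ℚ) ^ (a - b) = (-1) ^ a * (-1) ^ b := by
  have h2 : (-1 : ℚ) ^ b * (-1) ^ b = 1 := by
    rw [← pow_add]
    exact Even.neg_one_pow ⟨b, rfl⟩
  calc (-1 : ℚ) ^ (a - b) = (-1) ^ (a - b) * ((-1) ^ b * (-1) ^ b) := by rw [h2, mul_one]
    _ = ((-1) ^ (a - b) * (-1) ^ b) * (-1) ^ b := by ring
    _ = (-1) ^ a * (-1) ^ b := by rw [← pow_add]; congr 2; omega

/-- n-th finite difference of a polynomial of degree < n vanishes. -/
private lemma alt_sum_pow : ∀ n : ℕ, ∀ k : ℕ, k < n →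
    ∑ N ∈ Finset.range (n + 1), (-1 : ℚ) ^ N * (n.choose N : ℚ) * (N : ℚ) ^ k = 0 := by
  intro n
  induction n using Nat.strong_induction_on with
  | _ n ih =>
    intro k hk
    cases k with
    | zero =>
      have h0 : n ≠ 0 := by omega
      have := Int.alternating_sum_range_choose_of_ne h0
      have := congrArg (fun z : ℤ => (z : ℚ)) this
      push_cast at this ⊢
      simpa [mul_comm] using this
    | succ j =>
      obtain ⟨m, rfl⟩ : ∃ m, n = m + 1 := ⟨n - 1, by omega⟩
      have hjm : j < m := by omega
      rw [Finset.sum_range_succ']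
      have hzero : (-1 : ℚ) ^ 0 * ((m + 1).choose 0 : ℚ) * ((0 : ℕ) : ℚ) ^ (j + 1) = 0 := by
        simp
      rw [hzero, add_zero]
      have hterm : ∀ M : ℕ,
          (-1 : ℚ) ^ (M + 1) * (((m + 1).choose (M + 1) : ℕ) : ℚ) * ((M + 1 : ℕ) : ℚ) ^ (j + 1)
          = -((m + 1 : ℚ)) * ((-1) ^ M * (m.choose M : ℚ) * ((M : ℚ) + 1) ^ j) := by
        intro M
        have hc : ((m + 1).choose (M + 1) : ℚ) * ((M : ℚ) + 1) = (m + 1 : ℚ) * (m.choose M : ℚ) := by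
          have := Nat.add_one_mul_choose_eq m M
          have := congrArg (fun z : ℕ => (z : ℚ)) this
          push_cast at this
          rw [mul_comm ((m:ℚ)+1)]
          linarith [this]
        push_cast
        rw [pow_succ ((M : ℚ) + 1) j, pow_succ (-1 : ℚ) M]
        calc (-1 : ℚ) ^ M * -1 * ((m + 1).choose (M + 1) : ℚ) * (((M : ℚ) + 1) ^ j * ((M : ℚ) + 1))
            = -((-1 : ℚ) ^ M * (((m + 1).choose (M + 1) : ℚ) * ((M : ℚ) + 1)) * ((M : ℚ) + 1) ^ j) := by ring
          _ = _ := by rw [hc]; ring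
      calc ∑ M ∈ Finset.range (m + 1),
            (-1 : ℚ) ^ (M + 1) * (((m + 1).choose (M + 1) : ℕ) : ℚ) * ((M + 1 : ℕ) : ℚ) ^ (j + 1)
          = -((m + 1 : ℚ)) * ∑ M ∈ Finset.range (m + 1),
              (-1) ^ M * (m.choose M : ℚ) * ((M : ℚ) + 1) ^ j := by
            rw [Finset.mul_sum]; exact Finset.sum_congr rfl fun M _ => hterm M
        _ = 0 := by
            have hinner : ∑ M ∈ Finset.range (m + 1),
                (-1 : ℚ) ^ M * (m.choose M : ℚ) * ((M : ℚ) + 1) ^ j = 0 := by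
              have hexp : ∀ M : ℕ, ((M : ℚ) + 1) ^ j
                  = ∑ i ∈ Finset.range (j + 1), (M : ℚ) ^ i * (j.choose i : ℚ) := by
                intro M
                rw [add_pow]
                exact Finset.sum_congr rfl fun i _ => by ring
              calc ∑ M ∈ Finset.range (m + 1), (-1 : ℚ) ^ M * (m.choose M : ℚ) * ((M : ℚ) + 1) ^ j
                  = ∑ M ∈ Finset.range (m + 1), ∑ i ∈ Finset.range (j + 1),
                      (j.choose i : ℚ) * ((-1) ^ M * (m.choose M : ℚ) * (M : ℚ) ^ i) := by
                    refine Finset.sum_congr rfl fun M _ => ?_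
                    rw [hexp M, Finset.mul_sum]
                    exact Finset.sum_congr rfl fun i _ => by ring
                _ = ∑ i ∈ Finset.range (j + 1), (j.choose i : ℚ) *
                      ∑ M ∈ Finset.range (m + 1), (-1) ^ M * (m.choose M : ℚ) * (M : ℚ) ^ i := by
                    rw [Finset.sum_comm]
                    exact Finset.sum_congr rfl fun i _ => by rw [Finset.mul_sum]
                _ = 0 := by
                    refine Finset.sum_eq_zero fun i hi => ?_
                    rw [ih m (by omega) i (by simp at hi; omega), mul_zero]
            rw [hinner, mul_zero]

/-- For `n ≥ 3`, `∑_{N=1}^{n} C(n,N) N^{N-2} · N · A_{n-N}(-n) = 0`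
(the weighted count `∑_F (-n)^{|M(F)|} N(F)` over decorated forests vanishes). -/
theorem stmt_18 (n : ℕ) (hn : 3 ≤ n) :
    ∑ N ∈ Finset.Icc 1 n,
        (n.choose N : ℚ) * (N : ℚ) ^ (N - 2) * (N : ℚ) * abel (n - N) (-(n : ℚ)) = 0 := by
  have hterm : ∀ N ∈ Finset.Icc 1 n,
      (n.choose N : ℚ) * (N : ℚ) ^ (N - 2) * (N : ℚ) * abel (n - N) (-(n : ℚ))
      = (n : ℚ) * (-1) ^ n * ((-1) ^ N * (n.choose N : ℚ) * (N : ℚ) ^ (n - 2)) := by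
    intro N hN
    simp only [Finset.mem_Icc] at hN
    obtain ⟨hN1, hNn⟩ := hN
    have hpow1 : (N : ℚ) ^ (N - 2) * (N : ℚ) = (N : ℚ) ^ (N - 1) := by
      rcases Nat.lt_or_ge N 2 with h | h
      · interval_cases N ; norm_num
      · rw [← pow_succ]; congr 1; omega
    rcases eq_or_lt_of_le hNn with rfl | hlt
    · have h0 : N - N = 0 := by omega
      have ha : abel 0 (-(N : ℚ)) = 1 := by simp [abel]
      have hs : (-1 : ℚ) ^ N * (-1) ^ N = 1 := by
        rw [← pow_add]; exact Even.neg_one_pow ⟨N, rfl⟩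
      rw [h0, ha, mul_one, Nat.choose_self, Nat.cast_one, one_mul,
        show (N : ℚ) * (-1) ^ N * ((-1) ^ N * 1 * (N : ℚ) ^ (N - 2))
          = ((-1 : ℚ) ^ N * (-1) ^ N) * ((N : ℚ) ^ (N - 2) * (N : ℚ)) from by ring,
        hs, one_mul]
    · -- N < n
      have hsub : n - N ≠ 0 := by omega
      have hcast : ((n - N : ℕ) : ℚ) = (n : ℚ) - (N : ℚ) := Nat.cast_sub hNn
      rw [abel, if_neg hsub]
      have harg : -(n : ℚ) + ((n - N : ℕ) : ℚ) = -(N : ℚ) := by rw [hcast]; ring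
      rw [harg]
      have hneg : (-(N : ℚ)) ^ (n - N - 1) = (-1) ^ (n - N - 1) * (N : ℚ) ^ (n - N - 1) := by
        rw [neg_pow]
      rw [hneg]
      have hsign : (-1 : ℚ) * (-1) ^ (n - N - 1) = (-1) ^ (n - N) := by
        obtain ⟨d, hd⟩ : ∃ d, n - N = d + 1 := ⟨n - N - 1, by omega⟩
        have hd' : n - N - 1 = d := by omega
        rw [hd', hd, pow_succ]; ring
      have hsign2 : (-1 : ℚ) ^ (n - N) = (-1) ^ n * (-1) ^ N := neg_one_pow_sub n N hNn
      have hpows : (N : ℚ) ^ (N - 1) * (N : ℚ) ^ (n - N - 1) = (N : ℚ) ^ (n - 2) := by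
        rw [← pow_add]; congr 1; omega
      calc (n.choose N : ℚ) * (N : ℚ) ^ (N - 2) * (N : ℚ) *
            (-(n : ℚ) * ((-1) ^ (n - N - 1) * (N : ℚ) ^ (n - N - 1)))
          = (n.choose N : ℚ) * ((N : ℚ) ^ (N - 2) * (N : ℚ)) *
            ((n : ℚ) * ((-1) * (-1) ^ (n - N - 1)) * (N : ℚ) ^ (n - N - 1)) := by ring
        _ = (n.choose N : ℚ) * (N : ℚ) ^ (N - 1) *
            ((n : ℚ) * ((-1) ^ n * (-1) ^ N) * (N : ℚ) ^ (n - N - 1)) := by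
            rw [hpow1, hsign, hsign2]
        _ = (n : ℚ) * (-1) ^ n * ((-1) ^ N * (n.choose N : ℚ) *
            ((N : ℚ) ^ (N - 1) * (N : ℚ) ^ (n - N - 1))) := by ring
        _ = _ := by rw [hpows]
  rw [Finset.sum_congr rfl hterm, ← Finset.mul_sum]
  have hIcc : ∑ N ∈ Finset.Icc 1 n, (-1 : ℚ) ^ N * (n.choose N : ℚ) * (N : ℚ) ^ (n - 2)
      = ∑ N ∈ Finset.range (n + 1), (-1 : ℚ) ^ N * (n.choose N : ℚ) * (N : ℚ) ^ (n - 2) := by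
    rw [Finset.sum_range_succ']
    have h0 : (-1 : ℚ) ^ 0 * (n.choose 0 : ℚ) * ((0 : ℕ) : ℚ) ^ (n - 2) = 0 := by
      have : n - 2 ≠ 0 := by omega
      simp [this]
    rw [h0, add_zero, ← Finset.Ico_add_one_right_eq_Icc, Finset.sum_Ico_eq_sum_range]
    refine Finset.sum_congr (by congr 1) fun i _ => ?_
    have : 1 + i = i + 1 := by omega
    rw [this]
  rw [hIcc, alt_sum_pow n (n - 2) (by omega), mul_zero]
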